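/- arXiv:1603.07647 — 3 statements merged into one kernel-verified Lean document; each statement's English description precedes it below -/
import Mathlib

section
/- Let g : [0,∞) → ℝ be non-increasing with g(0) = 1, 0 < g(t) ≤ 1 for all t ≥ 0, and lim_{t→∞} g(t) = 0, and define f(r,s,ξ,η) := ‖ξ‖ + g(‖ξ‖)‖η‖ + ‖rη + s⊗ξ‖. Then for every r ∈ ℝ, s ∈ ℝ³, ξ ∈ ℝ², η ∈ ℝ^{3×2}, the recession function f^∞(r,s,ξ,η) := limsup_{t→∞} f(r,s,tξ,tη)/t equals ‖ξ‖ + χ_{{0}}(ξ)‖η‖ + ‖rη + s⊗ξ‖, where χ_{{0}}(ξ) = 1 if ξ = 0 and χ_{{0}}(ξ) = 0 otherwise; moreover, when ξ ≠ 0 the limsup is in fact a limit. -/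
open scoped Classical

open Filter

noncomputable section

abbrev E2 : Type := EuclideanSpace ℝ (Fin 2)
abbrev E3 : Type := EuclideanSpace ℝ (Fin 3)
abbrev E32 : Type := EuclideanSpace ℝ (Fin 3 × Fin 2)

/-- The tensor product `s ⊗ ξ`, viewed as a 3×2 matrix endowed with the
Frobenius (Euclidean) norm. -/
def tens (s : E3) (ξ : E2) : E32 := WithLp.toLp 2 (fun p : Fin 3 × Fin 2 => s p.1 * ξ p.2)

/-- The regularization density `f(r,s,ξ,η) = ‖ξ‖ + g(‖ξ‖)‖η‖ + ‖rη + s⊗ξ‖`. -/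
def fdens (g : ℝ → ℝ) (r : ℝ) (s : E3) (ξ : E2) (η : E32) : ℝ :=
  ‖ξ‖ + g ‖ξ‖ * ‖η‖ + ‖r • η + tens s ξ‖

lemma tens_smul (s : E3) (ξ : E2) (t : ℝ) : tens s (t • ξ) = t • tens s ξ := by
  ext p
  simp [tens, PiLp.smul_apply, smul_eq_mul]
  ring

lemma key (g : ℝ → ℝ) (r : ℝ) (s : E3) (ξ : E2) (η : E32) {t : ℝ} (ht : 0 < t) :
    fdens g r s (t • ξ) (t • η) / t
      = ‖ξ‖ + g (t * ‖ξ‖) * ‖η‖ + ‖r • η + tens s ξ‖ := by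
  have h1 : r • (t • η) + tens s (t • ξ) = t • (r • η + tens s ξ) := by
    rw [tens_smul, smul_add, smul_comm]
  rw [fdens, h1, norm_smul, norm_smul, norm_smul, Real.norm_eq_abs,
    abs_of_pos ht]
  field_simp

theorem stmt1 (g : ℝ → ℝ)
    (hg_pos : ∀ t : ℝ, 0 ≤ t → 0 < g t ∧ g t ≤ 1)
    (hg_mono : ∀ t₁ t₂ : ℝ, 0 ≤ t₁ → t₁ ≤ t₂ → g t₂ ≤ g t₁)
    (hg0 : g 0 = 1)
    (hg_lim : Tendsto g atTop (nhds 0))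
    (r : ℝ) (s : E3) (ξ : E2) (η : E32) :
    limsup (fun t : ℝ => fdens g r s (t • ξ) (t • η) / t) atTop
      = ‖ξ‖ + (if ξ = 0 then (1 : ℝ) else 0) * ‖η‖ + ‖r • η + tens s ξ‖ ∧
    (ξ ≠ 0 → Tendsto (fun t : ℝ => fdens g r s (t • ξ) (t • η) / t) atTop
        (nhds (‖ξ‖ + ‖r • η + tens s ξ‖))) := by
  have hlim : ξ ≠ 0 → Tendsto (fun t : ℝ => fdens g r s (t • ξ) (t • η) / t) atTop
      (nhds (‖ξ‖ + ‖r • η + tens s ξ‖)) := by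
    intro hξ
    have hpos : (0:ℝ) < ‖ξ‖ := norm_pos_iff.2 hξ
    have h1 : Tendsto (fun t : ℝ => t * ‖ξ‖) atTop atTop :=
      Tendsto.atTop_mul_const hpos tendsto_id
    have h2 : Tendsto (fun t : ℝ => g (t * ‖ξ‖) * ‖η‖) atTop (nhds 0) := by
      simpa using (hg_lim.comp h1).mul_const ‖η‖
    have h3 : Tendsto (fun t : ℝ =>
        ‖ξ‖ + g (t * ‖ξ‖) * ‖η‖ + ‖r • η + tens s ξ‖) atTop
        (nhds (‖ξ‖ + ‖r • η + tens s ξ‖)) := by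
      have := ((tendsto_const_nhds (x := ‖ξ‖) (f := atTop (α := ℝ))).add h2).add
        (tendsto_const_nhds (x := ‖r • η + tens s ξ‖) (f := atTop (α := ℝ)))
      simpa using this
    refine h3.congr' ?_
    filter_upwards [eventually_gt_atTop (0:ℝ)] with t ht
    exact (key g r s ξ η ht).symm
  constructor
  · by_cases hξ : ξ = 0
    · subst hξ
      have hc : Tendsto (fun t : ℝ => fdens g r s (t • (0:E2)) (t • η) / t) atTop
          (nhds (‖η‖ + ‖r • η‖)) := by
        refine tendsto_const_nhds.congr' ?_
        filter_upwards [eventually_gt_atTop (0:ℝ)] with t ht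
        have := key g r s (0:E2) η ht
        have htens : tens s (0:E2) = 0 := by
          ext p; simp [tens]
        rw [this, htens]
        simp [hg0]
      rw [hc.limsup_eq]
      have htens : tens s (0:E2) = 0 := by ext p; simp [tens]
      simp [htens]
    · rw [(hlim hξ).limsup_eq]
      simp [hξ]
  · exact hlim
end
end

section
/- Let Ω ⊂ ℝ² be a nonempty open bounded set, let 0 < α ≤ β, and let u₀ : Ω → ℝ³ be a measurable function with α ≤ ‖u₀(x)‖ ≤ β for a.e. x ∈ Ω. Then there exist a constant c₀ ∈ [α,β] and a measurable function u_c : Ω → S² taking at most two values such that, setting u_b(x) := c₀ for all x ∈ Ω, one has ∫_Ω (u_b(x) − ‖u₀(x)‖) dx = 0 and ∫_Ω (u_b(x) u_c(x) − u₀(x)) dx = 0. -/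
open MeasureTheory

noncomputable section

/-- Auxiliary: in `E2`, any measurable set of finite measure contained in a bounded open
set `Ω` can be cut by a ball to achieve any measure value between `0` and the measure of `Ω`. -/
lemma aux_exists_subset (Ω : Set E2) (hΩm : MeasurableSet Ω)
    (hbdd : Bornology.IsBounded Ω) (hfin : volume Ω ≠ ⊤)
    (a : ℝ) (ha0 : 0 ≤ a) (haM : a ≤ (volume Ω).toReal) :
    ∃ A : Set E2, A ⊆ Ω ∧ MeasurableSet A ∧ (volume A).toReal = a := by
  classical
  set fB : ℝ → ℝ := fun r => (volume (Metric.ball (0 : E2) r)).toReal with hfB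
  set g : ℝ → ℝ := fun r => (volume (Ω ∩ Metric.ball (0 : E2) r)).toReal with hg
  have hballfin : ∀ r : ℝ, volume (Metric.ball (0 : E2) r) ≠ ⊤ :=
    fun r => (measure_ball_lt_top).ne
  have hgfin : ∀ r : ℝ, volume (Ω ∩ Metric.ball (0 : E2) r) ≠ ⊤ :=
    fun r => ((measure_mono Set.inter_subset_left).trans_lt (lt_top_iff_ne_top.2 hfin)).ne
  -- explicit formula for `fB`
  obtain ⟨C, hfB_eq⟩ : ∃ C : ℝ, ∀ r : ℝ, fB r = (max r 0) ^ 2 * C := by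
    refine ⟨(ENNReal.ofReal (Real.sqrt Real.pi ^ Fintype.card (Fin 2) /
      Real.Gamma ((Fintype.card (Fin 2) : ℝ) / 2 + 1))).toReal, fun r => ?_⟩
    simp only [hfB]
    rw [EuclideanSpace.volume_ball (Fin 2) (0 : E2) r, ENNReal.toReal_mul,
      ENNReal.toReal_pow, ENNReal.toReal_ofReal']
    norm_num
  have hfB_cont : Continuous fB := by
    have : Continuous fun r : ℝ => (max r 0) ^ 2 * C := by fun_prop
    exact this.congr (fun r => (hfB_eq r).symm)
  -- key inequality: for r ≤ s, g s - g r ≤ fB s - fB r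
  have hkey : ∀ r s : ℝ, r ≤ s → g s - g r ≤ fB s - fB r := by
    intro r s hrs
    have hsub : Ω ∩ Metric.ball 0 s ⊆ (Ω ∩ Metric.ball 0 r) ∪
        (Metric.ball (0 : E2) s \ Metric.ball (0 : E2) r) := by
      intro x hx
      by_cases hxr : x ∈ Metric.ball (0 : E2) r
      · exact Or.inl ⟨hx.1, hxr⟩
      · exact Or.inr ⟨hx.2, hxr⟩
    have hdiff : volume (Metric.ball (0 : E2) s \ Metric.ball (0 : E2) r)
        = volume (Metric.ball (0 : E2) s) - volume (Metric.ball (0 : E2) r) :=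
      measure_diff (Metric.ball_subset_ball hrs) measurableSet_ball.nullMeasurableSet
        (hballfin r)
    have h1 : volume (Ω ∩ Metric.ball 0 s) ≤ volume (Ω ∩ Metric.ball 0 r) +
        volume (Metric.ball (0 : E2) s \ Metric.ball (0 : E2) r) :=
      (measure_mono hsub).trans (measure_union_le _ _)
    have hdfin : volume (Metric.ball (0 : E2) s \ Metric.ball (0 : E2) r) ≠ ⊤ :=
      ((measure_mono Set.diff_subset).trans_lt (lt_top_iff_ne_top.2 (hballfin s))).ne
    have h2 : g s ≤ g r + (volume (Metric.ball (0 : E2) s \ Metric.ball (0 : E2) r)).toReal := by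
      rw [← ENNReal.toReal_add (hgfin r) hdfin]
      exact ENNReal.toReal_mono (by exact ENNReal.add_ne_top.2 ⟨hgfin r, hdfin⟩) h1
    have h3 : (volume (Metric.ball (0 : E2) s \ Metric.ball (0 : E2) r)).toReal
        = fB s - fB r := by
      rw [hdiff, ENNReal.toReal_sub_of_le (measure_mono (Metric.ball_subset_ball hrs))
        (hballfin s)]
    linarith [h2, h3.symm.le, h3.le]
  have hgmono : Monotone g := by
    intro r s hrs
    exact ENNReal.toReal_mono (hgfin s)
      (measure_mono (Set.inter_subset_inter_right _ (Metric.ball_subset_ball hrs)))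
  have hfBmono : Monotone fB := by
    intro r s hrs
    exact ENNReal.toReal_mono (hballfin s) (measure_mono (Metric.ball_subset_ball hrs))
  -- continuity of g
  have hgcont : Continuous g := by
    rw [continuous_iff_continuousAt]
    intro r₀
    have hbound : ∀ s : ℝ, |g s - g r₀| ≤ |fB s - fB r₀| := by
      intro s
      rcases le_total s r₀ with h | h
      · rw [abs_sub_comm, abs_of_nonneg (by linarith [hgmono h]),
          abs_sub_comm, abs_of_nonneg (by linarith [hfBmono h])]
        exact hkey s r₀ h
      · rw [abs_of_nonneg (by linarith [hgmono h]), abs_of_nonneg (by linarith [hfBmono h])]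
        exact hkey r₀ s h
    have hf0 : Filter.Tendsto (fun s => |fB s - fB r₀|) (nhds r₀) (nhds 0) := by
      have h1 : Filter.Tendsto (fun s => fB s - fB r₀) (nhds r₀) (nhds (fB r₀ - fB r₀)) :=
        (hfB_cont.tendsto r₀).sub tendsto_const_nhds
      rw [sub_self] at h1
      simpa using h1.abs
    have hg0 : Filter.Tendsto (fun s => |g s - g r₀|) (nhds r₀) (nhds 0) :=
      squeeze_zero (fun s => abs_nonneg _) hbound hf0
    rw [ContinuousAt, tendsto_iff_dist_tendsto_zero]
    simpa [Real.dist_eq] using hg0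
  -- endpoints
  obtain ⟨R₀, hR₀⟩ := hbdd.subset_closedBall 0
  set R : ℝ := |R₀| + 1 with hR
  have hRpos : (0 : ℝ) ≤ R := by positivity
  have hΩR : Ω ⊆ Metric.ball (0 : E2) R := by
    intro x hx
    have := hR₀ hx
    rw [Metric.mem_closedBall] at this
    rw [Metric.mem_ball]
    calc dist x 0 ≤ R₀ := this
      _ ≤ |R₀| := le_abs_self _
      _ < R := by simp [hR]
  have hg0' : g 0 = 0 := by simp [hg]
  have hgR : g R = (volume Ω).toReal := by
    simp only [hg]
    rw [Set.inter_eq_left.mpr hΩR]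
  have hmem : a ∈ Set.Icc (g 0) (g R) := by
    rw [hg0', hgR]; exact ⟨ha0, haM⟩
  obtain ⟨r, _, hr⟩ := intermediate_value_Icc hRpos hgcont.continuousOn hmem
  exact ⟨Ω ∩ Metric.ball (0 : E2) r, Set.inter_subset_left,
    hΩm.inter measurableSet_ball, hr⟩

theorem stmt5 (α β : ℝ) (hα : 0 < α) (hαβ : α ≤ β)
    (Ω : Set E2) (hne : Ω.Nonempty) (hopen : IsOpen Ω)
    (hbdd : Bornology.IsBounded Ω)
    (u₀ : E2 → E3) (hmeas : Measurable u₀)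
    (hb : ∀ᵐ x ∂(volume.restrict Ω), α ≤ ‖u₀ x‖ ∧ ‖u₀ x‖ ≤ β) :
    ∃ c₀ ∈ Set.Icc α β, ∃ uc : E2 → E3,
      Measurable uc ∧ (∀ x, ‖uc x‖ = 1) ∧
      (∃ s₁ s₂ : E3, ∀ x, uc x = s₁ ∨ uc x = s₂) ∧
      (∫ x in Ω, (c₀ - ‖u₀ x‖)) = 0 ∧
      (∫ x in Ω, (c₀ • uc x - u₀ x)) = 0 := by
  classical
  have hΩm : MeasurableSet Ω := hopen.measurableSet
  have hMpos : 0 < volume Ω := hopen.measure_pos volume hne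
  have hMfin : volume Ω < ⊤ := hbdd.measure_lt_top
  set M : ℝ := (volume Ω).toReal with hM
  have hM0 : 0 < M := ENNReal.toReal_pos hMpos.ne' hMfin.ne
  haveI hfinM : IsFiniteMeasure (volume.restrict Ω) :=
    ⟨by rwa [Measure.restrict_apply_univ]⟩
  -- integrability
  have hint_norm : IntegrableOn (fun x => ‖u₀ x‖) Ω := by
    apply Integrable.mono' (integrable_const β) hmeas.norm.aestronglyMeasurable
    filter_upwards [hb] with x hx
    simpa [abs_of_nonneg (norm_nonneg _)] using hx.2
  have hint_u : IntegrableOn u₀ Ω := by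
    apply Integrable.mono' (integrable_const β) hmeas.aestronglyMeasurable
    filter_upwards [hb] with x hx using hx.2
  set I : ℝ := ∫ x in Ω, ‖u₀ x‖ with hI
  have hIl : α * M ≤ I := by
    have h1 : (∫ _ in Ω, α) ≤ I := by
      apply integral_mono_ae (integrable_const α) hint_norm
      filter_upwards [hb] with x hx using hx.1
    rwa [setIntegral_const, smul_eq_mul, mul_comm] at h1
  have hIu : I ≤ β * M := by
    have h1 : I ≤ (∫ _ in Ω, β) := by
      apply integral_mono_ae hint_norm (integrable_const β)
      filter_upwards [hb] with x hx using hx.2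
    rwa [setIntegral_const, smul_eq_mul, mul_comm] at h1
  set c₀ : ℝ := I / M with hc₀def
  have hc₀mem : c₀ ∈ Set.Icc α β := by
    constructor
    · rw [hc₀def, le_div_iff₀ hM0]; linarith
    · rw [hc₀def, div_le_iff₀ hM0]; linarith
  have hc₀pos : 0 < c₀ := lt_of_lt_of_le hα hc₀mem.1
  have hIeq : I = c₀ * M := by rw [hc₀def]; field_simp
  set v : E3 := ∫ x in Ω, u₀ x with hv
  have hvI : ‖v‖ ≤ I := norm_integral_le_integral_norm _
  set w : E3 := c₀⁻¹ • v with hw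
  have hwM : ‖w‖ ≤ M := by
    rw [hw, norm_smul, norm_inv, Real.norm_eq_abs, abs_of_pos hc₀pos]
    rw [inv_mul_le_iff₀ hc₀pos]
    calc ‖v‖ ≤ I := hvI
      _ = c₀ * M := hIeq
  -- unit vector e with ‖w‖ • e = w
  obtain ⟨e, he1, he2⟩ : ∃ e : E3, ‖e‖ = 1 ∧ ‖w‖ • e = w := by
    rcases eq_or_ne w 0 with h | h
    · refine ⟨EuclideanSpace.single (0 : Fin 3) (1 : ℝ), ?_, by simp [h]⟩
      rw [EuclideanSpace.norm_single]; norm_num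
    · refine ⟨‖w‖⁻¹ • w, ?_, ?_⟩
      · rw [norm_smul, norm_inv, norm_norm, inv_mul_cancel₀ (norm_ne_zero_iff.2 h)]
      · rw [smul_smul, mul_inv_cancel₀ (norm_ne_zero_iff.2 h), one_smul]
  -- subset of the right measure
  set a : ℝ := (M + ‖w‖) / 2 with ha
  have ha0 : 0 ≤ a := by have := norm_nonneg w; rw [ha]; linarith
  have haM : a ≤ M := by rw [ha]; linarith
  obtain ⟨A, hAΩ, hAm, hAvol⟩ := aux_exists_subset Ω hΩm hbdd hMfin.ne a ha0 haM
  have hAfin : volume A ≠ ⊤ := ((measure_mono hAΩ).trans_lt hMfin).ne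
  set uc : E2 → E3 := fun x => if x ∈ A then e else -e with huc
  have hucmeas : Measurable uc := Measurable.ite hAm measurable_const measurable_const
  have hucnorm : ∀ x, ‖uc x‖ = 1 := by
    intro x
    by_cases hx : x ∈ A <;> simp [huc, hx, he1]
  have hucint : IntegrableOn uc Ω := by
    apply Integrable.mono' (integrable_const (1 : ℝ)) hucmeas.aestronglyMeasurable
    filter_upwards with x using le_of_eq (hucnorm x)
  -- compute ∫ uc
  have hucI : (∫ x in Ω, uc x) = w := by
    have hsplit : A ∪ (Ω \ A) = Ω := Set.union_diff_cancel hAΩ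
    have hdisj : Disjoint A (Ω \ A) := Set.disjoint_sdiff_right
    have hIA : (∫ x in A, uc x) = a • e := by
      rw [setIntegral_congr_fun hAm (g := fun _ => e) (fun x hx => if_pos hx),
        setIntegral_const, measureReal_def, hAvol]
    have hvoldiff : (volume (Ω \ A)).toReal = M - a := by
      rw [measure_diff hAΩ hAm.nullMeasurableSet hAfin,
        ENNReal.toReal_sub_of_le (measure_mono hAΩ) hMfin.ne, hAvol]
    have hIB : (∫ x in Ω \ A, uc x) = (M - a) • (-e) := by
      rw [setIntegral_congr_fun (hΩm.diff hAm) (g := fun _ => -e) (fun x hx => if_neg hx.2),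
        setIntegral_const, measureReal_def, hvoldiff]
    calc (∫ x in Ω, uc x) = ∫ x in A ∪ (Ω \ A), uc x := by rw [hsplit]
      _ = (∫ x in A, uc x) + ∫ x in Ω \ A, uc x :=
        setIntegral_union hdisj (hΩm.diff hAm)
          (hucint.mono_set hAΩ) (hucint.mono_set Set.diff_subset)
      _ = a • e + (M - a) • (-e) := by rw [hIA, hIB]
      _ = (a - (M - a)) • e := by
        rw [smul_neg, ← sub_eq_add_neg, ← sub_smul]
      _ = ‖w‖ • e := by
        congr 1
        rw [ha]; ring
      _ = w := he2
  refine ⟨c₀, hc₀mem, uc, hucmeas, hucnorm, ⟨e, -e, fun x => ?_⟩, ?_, ?_⟩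
  · by_cases hx : x ∈ A
    · left; simp [huc, hx]
    · right; simp [huc, hx]
  · rw [integral_sub (integrable_const c₀) hint_norm, setIntegral_const, ← hI, hIeq,
      smul_eq_mul, measureReal_def, ← hM]
    ring
  · have hsm : IntegrableOn (fun x => c₀ • uc x) Ω := hucint.smul c₀
    rw [integral_sub hsm hint_u, integral_smul, hucI, ← hv, hw,
      smul_smul, mul_inv_cancel₀ hc₀pos.ne', one_smul, sub_self]
end
end

section
/- Let 0 < α ≤ β and let g : [0,∞) → ℝ be non-increasing and Lipschitz with 0 < g(t) ≤ 1 for all t, g(0) = 1, and lim_{t→∞} g(t) = 0; define f(r,s,ξ,η) := ‖ξ‖ + g(‖ξ‖)‖η‖ + ‖rη + s⊗ξ‖. Then for every r ∈ [α,β], s ∈ S², ξ ∈ ℝ², and η ∈ ℝ^{3×2} with sᵀη = 0, one has Q_T f(r,s,ξ,η) = QF(r,s,ξ,η), where Q_T f(r,s,ξ,η) := inf{ ∫_Q f(r,s,ξ+∇φ(y), η+∇ψ(y)) dy : φ : ℝ² → ℝ and ψ : ℝ² → ℝ³ Lipschitz, vanishing outside the open unit cube Q := (−1/2,1/2)²,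 with s·ψ(y) = 0 for all y } is the tangential quasiconvex envelope, and QF(r,s,ξ,η) := inf{ ∫_Q f(r,s,ξ+∇φ(y), P_s(η+∇ψ(y))) dy : φ : ℝ² → ℝ and ψ : ℝ² → ℝ³ Lipschitz, vanishing outside Q } is the (unconstrained) quasiconvex envelope of the projected integrand. -/
open MeasureTheory

noncomputable section

/-- The orthogonal projection `P_s η = (I - s sᵀ) η` of a 3×2 matrix, columnwise,
onto the tangent plane `T_s(S²)`. -/
def Pproj (s : E3) (η : E32) : E32 :=
  WithLp.toLp 2 (fun p : Fin 3 × Fin 2 => η p - s p.1 * ∑ i : Fin 3, s i * η (i, p.2))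

/-- The open unit cube `Q = (-1/2, 1/2)²`. -/
def cubeQ : Set E2 := {y | ∀ j, y j ∈ Set.Ioo (-(1/2) : ℝ) (1/2)}

/-- The gradient `∇φ(y) ∈ ℝ²` of a scalar function `φ : ℝ² → ℝ`. -/
def gradv (φ : E2 → ℝ) (y : E2) : E2 :=
  WithLp.toLp 2 (fun j => fderiv ℝ φ y (EuclideanSpace.single j 1))

/-- The gradient `∇ψ(y) ∈ ℝ^{3×2}` of a vector-valued function `ψ : ℝ² → ℝ³`. -/
def gradm (ψ : E2 → E3) (y : E2) : E32 :=
  WithLp.toLp 2 (fun p : Fin 3 × Fin 2 => fderiv ℝ ψ y (EuclideanSpace.single p.2 1) p.1)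

/-- The tangential quasiconvex envelope `Q_T f(r,s,ξ,η)`: the infimum of
`∫_Q f(r,s,ξ+∇φ,η+∇ψ)` over Lipschitz `φ, ψ` vanishing outside `Q`, with `ψ`
valued in the tangent plane `T_s(S²)`. -/

def projL (s : E3) : E3 →L[ℝ] E3 :=
  ContinuousLinearMap.id ℝ E3 - (innerSL ℝ s).smulRight s

lemma projL_apply (s v : E3) : projL s v = v - (inner ℝ s v : ℝ) • s := rfl

lemma inner_eq_sum (s v : E3) : (inner ℝ s v : ℝ) = ∑ i, s i * v i := by
  simp [PiLp.inner_apply, RCLike.inner_apply, mul_comm]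

lemma inner_projL (s : E3) (hs : ‖s‖ = 1) (v : E3) : (inner ℝ s (projL s v) : ℝ) = 0 := by
  have h : (inner ℝ s s : ℝ) = 1 := by
    rw [real_inner_self_eq_norm_mul_norm, hs]; norm_num
  simp [projL_apply, inner_sub_right, inner_smul_right, h, hs]

lemma meas_cubeQ : MeasurableSet cubeQ := by
  have : cubeQ = ⋂ j : Fin 2, (fun y : E2 => y j) ⁻¹' Set.Ioo (-(1/2):ℝ) (1/2) := by
    ext y; simp [cubeQ]
  rw [this]
  exact MeasurableSet.iInter fun j =>
    measurableSet_Ioo.preimage (EuclideanSpace.proj (𝕜 := ℝ) j).continuous.measurable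

lemma Pproj_eq_self (s : E3) (ζ : E32) (h : ∀ j, ∑ i : Fin 3, s i * ζ (i, j) = 0) :
    Pproj s ζ = ζ := by
  ext p; simp [Pproj, h p.2]

lemma gradm_tangent (s : E3) (ψ : E2 → E3) (hψ : ∀ y, (inner ℝ s (ψ y) : ℝ) = 0)
    (y : E2) (j : Fin 2) : ∑ i : Fin 3, s i * gradm ψ y (i, j) = 0 := by
  have key : (inner ℝ s (fderiv ℝ ψ y (EuclideanSpace.single j 1)) : ℝ) = 0 := by
    by_cases hy : DifferentiableAt ℝ ψ y
    · have h1 : fderiv ℝ (fun x => (innerSL ℝ s) (ψ x)) y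
          = (innerSL ℝ s).comp (fderiv ℝ ψ y) :=
        ((innerSL ℝ s).hasFDerivAt.comp y hy.hasFDerivAt).fderiv
      have h2 : (fun x => (innerSL ℝ s) (ψ x)) = fun _ => (0:ℝ) := by
        funext x; simpa using hψ x
      have h3 : (innerSL ℝ s).comp (fderiv ℝ ψ y) = 0 := by
        rw [← h1, h2]; exact fderiv_const_apply 0
      have := DFunLike.congr_fun h3 (EuclideanSpace.single j 1)
      simpa using this
    · rw [fderiv_zero_of_not_differentiableAt hy]; simp
  rw [inner_eq_sum] at key
  simpa [gradm] using key

lemma gradm_proj (s : E3) (ψ : E2 → E3) (y : E2) (hy : DifferentiableAt ℝ ψ y) :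
    gradm (fun x => projL s (ψ x)) y = Pproj s (gradm ψ y) := by
  have h1 : fderiv ℝ (fun x => projL s (ψ x)) y = (projL s).comp (fderiv ℝ ψ y) :=
    ((projL s).hasFDerivAt.comp y hy.hasFDerivAt).fderiv
  ext p
  simp only [gradm, Pproj, h1, ContinuousLinearMap.comp_apply, PiLp.toLp_apply]
  simp only [projL_apply, PiLp.sub_apply, PiLp.smul_apply, smul_eq_mul, inner_eq_sum]
  ring

lemma Pproj_add (s : E3) (η ζ : E32) : Pproj s (η + ζ) = Pproj s η + Pproj s ζ := by
  ext p
  simp [Pproj, mul_add, Finset.sum_add_distrib]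
  ring

def QTf (g : ℝ → ℝ) (r : ℝ) (s : E3) (ξ : E2) (η : E32) : ℝ :=
  sInf {v : ℝ | ∃ φ : E2 → ℝ, ∃ ψ : E2 → E3,
    (∃ K : NNReal, LipschitzWith K φ) ∧ (∃ K : NNReal, LipschitzWith K ψ) ∧
    (∀ y ∉ cubeQ, φ y = 0) ∧ (∀ y ∉ cubeQ, ψ y = 0) ∧
    (∀ y, (inner ℝ s (ψ y) : ℝ) = 0) ∧
    v = ∫ y in cubeQ, fdens g r s (ξ + gradv φ y) (η + gradm ψ y)}

/-- The (unconstrained) quasiconvex envelope of the projected integrand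
`(ξ,η) ↦ f(r,s,ξ,P_s η)`. -/
def Qfproj (g : ℝ → ℝ) (r : ℝ) (s : E3) (ξ : E2) (η : E32) : ℝ :=
  sInf {v : ℝ | ∃ φ : E2 → ℝ, ∃ ψ : E2 → E3,
    (∃ K : NNReal, LipschitzWith K φ) ∧ (∃ K : NNReal, LipschitzWith K ψ) ∧
    (∀ y ∉ cubeQ, φ y = 0) ∧ (∀ y ∉ cubeQ, ψ y = 0) ∧
    v = ∫ y in cubeQ, fdens g r s (ξ + gradv φ y) (Pproj s (η + gradm ψ y))}

theorem stmt11 (α β : ℝ) (hα : 0 < α) (hαβ : α ≤ β) (g : ℝ → ℝ)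
    (hg_pos : ∀ t : ℝ, 0 ≤ t → 0 < g t ∧ g t ≤ 1)
    (hg_mono : ∀ t₁ t₂ : ℝ, 0 ≤ t₁ → t₁ ≤ t₂ → g t₂ ≤ g t₁)
    (hg_lip : ∃ K : NNReal, LipschitzOnWith K g (Set.Ici 0))
    (hg0 : g 0 = 1)
    (hg_lim : Filter.Tendsto g Filter.atTop (nhds 0))
    (r : ℝ) (hr : r ∈ Set.Icc α β) (s : E3) (hs : ‖s‖ = 1)
    (ξ : E2) (η : E32)
    (hη : ∀ j : Fin 2, ∑ i : Fin 3, s i * η (i, j) = 0) :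
    QTf g r s ξ η = Qfproj g r s ξ η := by
  have hPη : Pproj s η = η := Pproj_eq_self s η hη
  unfold QTf Qfproj
  congr 1
  ext v
  constructor
  · rintro ⟨φ, ψ, hφK, hψK, hφ0, hψ0, htan, hv⟩
    refine ⟨φ, ψ, hφK, hψK, hφ0, hψ0, ?_⟩
    rw [hv]
    refine setIntegral_congr_fun meas_cubeQ fun y _ => ?_
    have : Pproj s (η + gradm ψ y) = η + gradm ψ y := by
      apply Pproj_eq_self
      intro j
      have h1 := hη j
      have h2 := gradm_tangent s ψ htan y j
      calc ∑ i : Fin 3, s i * (η + gradm ψ y) (i, j)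
          = ∑ i : Fin 3, (s i * η (i, j) + s i * gradm ψ y (i, j)) := by
            apply Finset.sum_congr rfl; intro i _
            simp [PiLp.add_apply, mul_add]
        _ = 0 := by rw [Finset.sum_add_distrib, h1, h2]; ring
    rw [this]
  · rintro ⟨φ, ψ, hφK, ⟨K, hK⟩, hφ0, hψ0, hv⟩
    refine ⟨φ, fun x => projL s (ψ x), hφK,
      ⟨‖projL s‖₊ * K, ((projL s).lipschitz).comp hK⟩,
      hφ0, fun y hy => by show projL s (ψ y) = 0; rw [hψ0 y hy]; simp,
      fun y => inner_projL s hs (ψ y), ?_⟩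
    rw [hv]
    apply setIntegral_congr_ae meas_cubeQ
    filter_upwards [hK.ae_differentiableAt] with y hy _
    have : η + gradm (fun x => projL s (ψ x)) y = Pproj s (η + gradm ψ y) := by
      rw [gradm_proj s ψ y hy, Pproj_add, hPη]
    rw [this]
end
end
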